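/- Let L₁, ..., L_ℓ be directed graphs that are pairwise vertex-disjoint except for three shared terminal vertices v₁, v₂, v₃, and let L be their union. Then for distinct i, j ∈ {1,2,3} with k the remaining index, there is a path of parity p from v_i to v_j in L avoiding v_k if and only if there is such a path in some L_a. (Direct path parities of a clique-sum of pieces glued at the terminals are the union of direct path parities of the pieces.) -/

import Mathlib

/-- `l` is a simple directed path along the edge relation `E` from `a` to `b`. -/
def IsDipathFrom {V : Type*} (E : V → V → Prop) (l : List V) (a b : V) : Prop :=
  l.Nodup ∧ l.Chain' E ∧ l.head? = some a ∧ l.getLast? = some b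

/-- The length (number of edges) of a path given as its list of vertices. -/
def pathLen {V : Type*} (l : List V) : ℕ := l.length - 1

/-- Let `L₁, …, L_ℓ` be directed graphs pairwise vertex-disjoint except for three
shared terminals `v 0, v 1, v 2`, and let `L` be their union.  For distinct `i, j, k`,
there is a simple path of parity `p` from `v i` to `v j` in `L` avoiding `v k`
iff there is such a path in some piece `L a`. -/
theorem stmt_3 {V : Type*} {ℓ : ℕ} (E : Fin ℓ → V → V → Prop) (S : Fin ℓ → Set V)
    (v : Fin 3 → V) (hv : Function.Injective v)
    (hterm : ∀ (a : Fin ℓ) (m : Fin 3), v m ∈ S a)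
    (hE : ∀ a u w, E a u w → u ∈ S a ∧ w ∈ S a)
    (hInter : ∀ a b, a ≠ b → S a ∩ S b = {v 0, v 1, v 2})
    (i j k : Fin 3) (hij : i ≠ j) (hjk : j ≠ k) (hik : i ≠ k) (p : ℕ) :
    (∃ l : List V, IsDipathFrom (fun u w => ∃ a, E a u w) l (v i) (v j) ∧
      v k ∉ l ∧ pathLen l % 2 = p) ↔
    (∃ (a : Fin ℓ) (l : List V), IsDipathFrom (E a) l (v i) (v j) ∧
      v k ∉ l ∧ pathLen l % 2 = p) := by
  constructor
  · rintro ⟨l, ⟨hnd, hch, hhd, hlast⟩, hk, hp⟩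
    -- key lemma: a chain whose internal vertices avoid the terminals lies in one piece
    have key : ∀ (t : List V) (x y : V),
        List.Chain' (fun u w => ∃ a, E a u w) (x :: y :: t) →
        (∀ w ∈ (y :: t).dropLast, w ∉ ({v 0, v 1, v 2} : Set V)) →
        ∃ a, List.Chain' (E a) (x :: y :: t) := by
      intro t
      induction t with
      | nil =>
        intro x y hc _
        obtain ⟨⟨a, ha⟩, -⟩ := List.isChain_cons_cons.mp hc
        exact ⟨a, List.isChain_cons_cons.mpr ⟨ha, List.isChain_singleton y⟩⟩
      | cons z t' ih =>
        intro x y hc hint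
        obtain ⟨⟨a₀, ha₀⟩, hc'⟩ := List.isChain_cons_cons.mp hc
        have e : (y :: z :: t').dropLast = y :: (z :: t').dropLast := rfl
        have hint' : ∀ w ∈ (z :: t').dropLast, w ∉ ({v 0, v 1, v 2} : Set V) := by
          intro w hw
          exact hint w (by rw [e]; exact List.mem_cons_of_mem _ hw)
        obtain ⟨a, ha⟩ := ih y z hc' hint'
        have hyz : E a y z := (List.isChain_cons_cons.mp ha).1
        have hy : y ∉ ({v 0, v 1, v 2} : Set V) := by
          apply hint y; rw [e]; exact List.mem_cons_self
        by_cases haa : a₀ = a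
        · subst haa
          exact ⟨a₀, List.isChain_cons_cons.mpr ⟨ha₀, ha⟩⟩
        · exfalso
          apply hy
          rw [← hInter a₀ a haa]
          exact ⟨(hE a₀ x y ha₀).2, (hE a y z hyz).1⟩
    -- l = v i :: y :: rest
    obtain ⟨tl, rfl⟩ : ∃ tl, l = v i :: tl := by
      cases l with
      | nil => simp at hhd
      | cons x t =>
        simp only [List.head?_cons, Option.some.injEq] at hhd
        exact ⟨t, by rw [hhd]⟩
    cases tl with
    | nil =>
      exfalso
      simp only [List.getLast?_singleton, Option.some.injEq] at hlast
      exact hij (hv hlast)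
    | cons y rest =>
      set l : List V := v i :: y :: rest with hl
      have hne : l ≠ [] := by simp [hl]
      have hlastmem : l.getLast hne = v j := by
        have := List.getLast?_eq_getLast hne
        rw [this] at hlast
        exact Option.some.inj hlast
      have hdisj : l.getLast hne ∉ l.dropLast := by
        have hsplit : l.dropLast ++ [l.getLast hne] = l := List.dropLast_append_getLast hne
        have hnd' : (l.dropLast ++ [l.getLast hne]).Nodup := by rw [hsplit]; exact hnd
        have := (List.nodup_append'.mp hnd').2.2
        intro hmem
        exact this hmem (List.mem_singleton_self _)
      have hint : ∀ w ∈ (y :: rest).dropLast, w ∉ ({v 0, v 1, v 2} : Set V) := by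
        intro w hw hwT
        have hwdrop : w ∈ l.dropLast := by
          have : l.dropLast = v i :: (y :: rest).dropLast := rfl
          rw [this]; exact List.mem_cons_of_mem _ hw
        have hwtail : w ∈ y :: rest := List.dropLast_subset _ hw
        have hwi : w ≠ v i := by
          rintro rfl
          exact (List.nodup_cons.mp hnd).1 hwtail
        have hwj : w ≠ v j := by
          rintro rfl
          rw [← hlastmem] at hwdrop
          exact hdisj hwdrop
        have hwk : w ≠ v k := by
          rintro rfl
          exact hk (List.mem_cons_of_mem _ hwtail)
        have hall : ∀ m : Fin 3, m = i ∨ m = j ∨ m = k := by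
          intro m
          have h1 : i.val ≠ j.val := fun h => hij (Fin.ext h)
          have h2 : j.val ≠ k.val := fun h => hjk (Fin.ext h)
          have h3 : i.val ≠ k.val := fun h => hik (Fin.ext h)
          have hi := i.isLt; have hj := j.isLt; have hk := k.isLt; have hm := m.isLt
          have : m.val = i.val ∨ m.val = j.val ∨ m.val = k.val := by omega
          rcases this with h | h | h
          exacts [Or.inl (Fin.ext h), Or.inr (Or.inl (Fin.ext h)),
            Or.inr (Or.inr (Fin.ext h))]
        have : ∃ m : Fin 3, w = v m := by
          rcases hwT with h | h | h
          exacts [⟨0, h⟩, ⟨1, h⟩, ⟨2, h⟩]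
        obtain ⟨m, rfl⟩ := this
        rcases hall m with rfl | rfl | rfl
        exacts [hwi rfl, hwj rfl, hwk rfl]
      obtain ⟨a, ha⟩ := key rest (v i) y hch hint
      exact ⟨a, l, ⟨hnd, ha, hhd, hlast⟩, hk, hp⟩
  · rintro ⟨a, l, ⟨hnd, hch, hhd, hlast⟩, hk, hp⟩
    exact ⟨l, ⟨hnd, hch.imp fun u w h => ⟨a, h⟩, hhd, hlast⟩, hk, hp⟩
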